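/- arXiv:2203.07590 — 3 statements merged into one kernel-verified Lean document; each statement's English description precedes it below -/
import Mathlib

section
/- For θ, θ', φ, φ' real, as N → ∞ with θ = r/√N and θ' = r'/√N fixed in r, r', the expression e^{i(φ−φ')} sin(θ/2) sin(θ'/2) + cos(θ/2) cos(θ'/2) equals 1 + (1/(4N))·(z·conj(w) − (|z|²+|w|²)/2) + o(1/N), where z = r·e^{iφ} and w = r'·e^{iφ'}. -/
lemma pow43 {x : ℝ} (hx : |x| ≤ 1) : |x|^4 ≤ |x|^3 := by
  have h := abs_nonneg x
  calc |x|^4 = |x|^3 * |x| := by ring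
    _ ≤ |x|^3 * 1 := by
        apply mul_le_mul_of_nonneg_left hx (by positivity)
    _ = |x|^3 := mul_one _

lemma sin_approx' {x : ℝ} (hx : |x| ≤ 1) : |Real.sin x - x| ≤ |x|^3 := by
  have h := Real.sin_bound hx
  have h3 := pow43 hx
  have h6 : |-x ^ 3 / 6| = |x|^3/6 := by rw [abs_div, abs_neg, abs_pow]; norm_num
  calc |Real.sin x - x| = |(Real.sin x - (x - x^3/6)) + (-x^3/6)| := by ring_nf
    _ ≤ |Real.sin x - (x - x^3/6)| + |(-x^3/6)| := abs_add_le _ _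
    _ ≤ |x|^4 * (5/96) + |x|^3/6 := by
        rw [h6]; gcongr
        exact h.trans (by nlinarith [mul_le_mul_of_nonneg_left hx (pow_nonneg (abs_nonneg x) 4), pow_nonneg (abs_nonneg x) 4])
    _ ≤ |x|^3 := by nlinarith [pow_nonneg (abs_nonneg x) 3]

lemma cos_approx' {x : ℝ} (hx : |x| ≤ 1) : |Real.cos x - (1 - x^2/2)| ≤ |x|^3 := by
  have h := Real.cos_bound hx
  have h3 := pow43 hx
  nlinarith [pow_nonneg (abs_nonneg x) 4]

lemma sin_mul_approx {x y : ℝ} (hx : |x| ≤ 1) (hy : |y| ≤ 1) :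
    |Real.sin x * Real.sin y - x * y| ≤ |x|^3 + |y|^3 := by
  have h1 : Real.sin x * Real.sin y - x * y
      = Real.sin x * (Real.sin y - y) + y * (Real.sin x - x) := by ring
  rw [h1]
  calc |Real.sin x * (Real.sin y - y) + y * (Real.sin x - x)|
      ≤ |Real.sin x * (Real.sin y - y)| + |y * (Real.sin x - x)| := abs_add_le _ _
    _ = |Real.sin x| * |Real.sin y - y| + |y| * |Real.sin x - x| := by rw [abs_mul, abs_mul]
    _ ≤ 1 * |y|^3 + 1 * |x|^3 := by
        gcongr <;> first
          | exact Real.abs_sin_le_one _ | exact sin_approx' hy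
          | exact hy | exact sin_approx' hx | positivity
    _ = |x|^3 + |y|^3 := by ring

lemma cos_mul_approx {x y : ℝ} (hx : |x| ≤ 1) (hy : |y| ≤ 1) :
    |Real.cos x * Real.cos y - (1 - (x^2 + y^2)/2)| ≤ |x|^3 + |y|^3 + x^2*y^2/4 := by
  have h1 : Real.cos x * Real.cos y - (1 - (x^2 + y^2)/2)
      = Real.cos x * (Real.cos y - (1 - y^2/2)) + (1 - y^2/2) * (Real.cos x - (1 - x^2/2))
        + x^2*y^2/4 := by ring
  have hy2 : |1 - y^2/2| ≤ 1 := by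
    rw [abs_le]
    constructor <;> nlinarith [sq_abs y, abs_nonneg y, sq_nonneg y]
  rw [h1]
  calc |Real.cos x * (Real.cos y - (1 - y^2/2)) + (1 - y^2/2) * (Real.cos x - (1 - x^2/2))
        + x^2*y^2/4|
      ≤ |Real.cos x * (Real.cos y - (1 - y^2/2))| + |(1 - y^2/2) * (Real.cos x - (1 - x^2/2))|
        + |x^2*y^2/4| := abs_add_three _ _ _
    _ = |Real.cos x| * |Real.cos y - (1 - y^2/2)| + |1 - y^2/2| * |Real.cos x - (1 - x^2/2)|
        + |x^2*y^2/4| := by rw [abs_mul, abs_mul]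
    _ ≤ 1 * |y|^3 + 1 * |x|^3 + x^2*y^2/4 := by
        have habs : |x^2*y^2/4| = x^2*y^2/4 := abs_of_nonneg (by positivity)
        rw [habs]
        gcongr <;> first
          | exact Real.abs_cos_le_one _ | exact cos_approx' hy
          | exact hy2 | exact cos_approx' hx | positivity
    _ = |x|^3 + |y|^3 + x^2*y^2/4 := by ring



open Filter Complex Asymptotics

lemma sqrt_nat_tendsto : Tendsto (fun N : ℕ => Real.sqrt N) atTop atTop := by
  rw [tendsto_atTop_atTop]
  intro b
  refine ⟨⌈b^2⌉₊, fun N hN => ?_⟩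
  rcases le_or_gt b 0 with hb | hb
  · exact hb.trans (Real.sqrt_nonneg _)
  · have h1 : b^2 ≤ (N:ℝ) := le_trans (Nat.le_ceil _) (by exact_mod_cast hN)
    calc b = Real.sqrt (b^2) := (Real.sqrt_sq hb.le).symm
      _ ≤ Real.sqrt N := Real.sqrt_le_sqrt h1

lemma littleo_fact : (fun N : ℕ => 1/((N:ℝ) * Real.sqrt N)) =o[atTop] (fun N : ℕ => 1/(N:ℝ)) := by
  rw [Asymptotics.isLittleO_iff]
  intro c hc
  filter_upwards [eventually_ge_atTop 1, sqrt_nat_tendsto.eventually_ge_atTop (1/c)] with N hN hs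
  have hN0 : (0:ℝ) < N := by exact_mod_cast hN
  have ht0 : 0 < Real.sqrt N := Real.sqrt_pos.mpr hN0
  have h2 : 1 ≤ c * Real.sqrt N := by rw [div_le_iff₀ hc] at hs; linarith [hs]
  simp only [Real.norm_eq_abs]
  rw [_root_.abs_of_nonneg (by positivity), _root_.abs_of_nonneg (by positivity),
    div_le_iff₀ (by positivity : (0:ℝ) < (N:ℝ) * Real.sqrt N)]
  calc c * (1/(N:ℝ)) * ((N:ℝ) * Real.sqrt N) = c * Real.sqrt N := by field_simp
    _ ≥ 1 := h2





set_option maxHeartbeats 1000000 in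
theorem spherical_kernel_expansion (r r' φ φ' : ℝ) (z w : ℂ)
    (hz : z = (r : ℂ) * Complex.exp (Complex.I * φ))
    (hw : w = (r' : ℂ) * Complex.exp (Complex.I * φ')) :
    (fun N : ℕ =>
        (Complex.exp (Complex.I * ((φ : ℂ) - φ')) *
            (Real.sin (r / Real.sqrt N / 2) : ℝ) * (Real.sin (r' / Real.sqrt N / 2) : ℝ) +
          (Real.cos (r / Real.sqrt N / 2) : ℝ) * (Real.cos (r' / Real.sqrt N / 2) : ℝ))
        - (1 + (1 / (4 * (N : ℂ))) *
            (z * (starRingEnd ℂ) w -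
              ((‖z‖ ^ 2 + ‖w‖ ^ 2 : ℝ) : ℂ) / 2)))
      =o[atTop] (fun N : ℕ => 1 / (N : ℝ)) := by
  have habz : ‖z‖ ^ 2 = r ^ 2 := by
    simp [hz, map_mul, Complex.norm_real, Complex.norm_exp, sq_abs]
  have habw : ‖w‖ ^ 2 = r' ^ 2 := by
    simp [hw, map_mul, Complex.norm_real, Complex.norm_exp, sq_abs]
  have hzw : z * (starRingEnd ℂ) w
      = ((r * r' : ℝ) : ℂ) * Complex.exp (Complex.I * ((φ:ℂ) - φ')) := by
    have h1 : Complex.exp (Complex.I*φ) * Complex.exp (-(Complex.I*φ')) =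
        Complex.exp (Complex.I*((φ:ℂ)-φ')) := by rw [← Complex.exp_add]; congr 1; ring
    rw [hz, hw, map_mul, ← Complex.exp_conj]
    simp only [map_mul, Complex.conj_I, Complex.conj_ofReal]
    push_cast
    rw [show -Complex.I * (φ':ℂ) = -(Complex.I * φ') by ring]
    rw [mul_mul_mul_comm, h1]
  set C : ℝ := 2*|r|^3 + 2*|r'|^3 + r^2*r'^2 + 1 with hC
  have hbigO : (fun N : ℕ =>
        (Complex.exp (Complex.I * ((φ : ℂ) - φ')) *
            (Real.sin (r / Real.sqrt N / 2) : ℝ) * (Real.sin (r' / Real.sqrt N / 2) : ℝ) +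
          (Real.cos (r / Real.sqrt N / 2) : ℝ) * (Real.cos (r' / Real.sqrt N / 2) : ℝ))
        - (1 + (1 / (4 * (N : ℂ))) *
            (z * (starRingEnd ℂ) w -
              ((‖z‖ ^ 2 + ‖w‖ ^ 2 : ℝ) : ℂ) / 2)))
      =O[atTop] (fun N : ℕ => 1/((N:ℝ) * Real.sqrt N)) := by
    rw [Asymptotics.isBigO_iff]
    refine ⟨C, ?_⟩
    filter_upwards [eventually_ge_atTop 1,
      sqrt_nat_tendsto.eventually_ge_atTop (max |r| (max |r'| 1))] with N hN hsq
    have hN0 : (0:ℝ) < N := by exact_mod_cast hN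
    set t : ℝ := Real.sqrt N with htdef
    have ht0 : 0 < t := Real.sqrt_pos.mpr hN0
    have htt : t * t = (N:ℝ) := Real.mul_self_sqrt hN0.le
    have ht1 : 1 ≤ t := le_trans (le_max_of_le_right (le_max_right _ _)) hsq
    have hrt : |r| ≤ t := le_trans (le_max_left _ _) hsq
    have hrt' : |r'| ≤ t := le_trans (le_max_of_le_right (le_max_left _ _)) hsq
    set x : ℝ := r / t / 2 with hxdef
    set y : ℝ := r' / t / 2 with hydef
    have hxabs : |x| = |r| / t / 2 := by
      rw [hxdef, abs_div, abs_div, _root_.abs_of_pos ht0, _root_.abs_two]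
    have hyabs : |y| = |r'| / t / 2 := by
      rw [hydef, abs_div, abs_div, _root_.abs_of_pos ht0, _root_.abs_two]
    have hx1 : |x| ≤ 1 := by
      rw [hxabs]
      calc |r| / t / 2 ≤ t / t / 2 := by gcongr
        _ = 1/2 := by field_simp
        _ ≤ 1 := by norm_num
    have hy1 : |y| ≤ 1 := by
      rw [hyabs]
      calc |r'| / t / 2 ≤ t / t / 2 := by gcongr
        _ = 1/2 := by field_simp
        _ ≤ 1 := by norm_num
    -- exact identity
    have hNC : (N:ℂ) ≠ 0 := by exact_mod_cast hN0.ne'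
    have hxy : x * y = r * r' / (4 * (N:ℝ)) := by
      rw [hxdef, hydef, ← htt]; field_simp; ring_nf
    have hx2y2 : (x^2 + y^2)/2 = (r^2 + r'^2) / (8 * (N:ℝ)) := by
      rw [hxdef, hydef, ← htt]; field_simp; ring_nf
    have hident :
        (Complex.exp (Complex.I * ((φ : ℂ) - φ')) *
            (Real.sin (r / Real.sqrt N / 2) : ℝ) * (Real.sin (r' / Real.sqrt N / 2) : ℝ) +
          (Real.cos (r / Real.sqrt N / 2) : ℝ) * (Real.cos (r' / Real.sqrt N / 2) : ℝ))
        - (1 + (1 / (4 * (N : ℂ))) *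
            (z * (starRingEnd ℂ) w -
              ((‖z‖ ^ 2 + ‖w‖ ^ 2 : ℝ) : ℂ) / 2))
        = Complex.exp (Complex.I * ((φ : ℂ) - φ')) *
            (((Real.sin x * Real.sin y - x*y : ℝ)) : ℂ) +
          (((Real.cos x * Real.cos y - (1 - (x^2+y^2)/2) : ℝ)) : ℂ) := by
      rw [hzw, habz, habw, ← hxdef, ← hydef]
      push_cast [hxy, hx2y2]
      field_simp
      ring
    rw [hident]
    -- norm bound
    have hexp : ‖Complex.exp (Complex.I * ((φ : ℂ) - φ'))‖ = 1 := by
      rw [Complex.norm_exp]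
      simp
    calc ‖Complex.exp (Complex.I * ((φ : ℂ) - φ')) *
            (((Real.sin x * Real.sin y - x*y : ℝ)) : ℂ) +
          (((Real.cos x * Real.cos y - (1 - (x^2+y^2)/2) : ℝ)) : ℂ)‖
        ≤ ‖Complex.exp (Complex.I * ((φ : ℂ) - φ')) *
            (((Real.sin x * Real.sin y - x*y : ℝ)) : ℂ)‖ +
          ‖(((Real.cos x * Real.cos y - (1 - (x^2+y^2)/2) : ℝ)) : ℂ)‖ := norm_add_le _ _
      _ = |Real.sin x * Real.sin y - x*y| + |Real.cos x * Real.cos y - (1 - (x^2+y^2)/2)| := by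
          rw [norm_mul, hexp,
            Complex.norm_real, Complex.norm_real, Real.norm_eq_abs, Real.norm_eq_abs, one_mul]
      _ ≤ (|x|^3 + |y|^3) + (|x|^3 + |y|^3 + x^2*y^2/4) :=
          add_le_add (sin_mul_approx hx1 hy1) (cos_mul_approx hx1 hy1)
      _ ≤ C * ‖1/((N:ℝ) * t)‖ := by
          have hnorm : ‖1/((N:ℝ) * t)‖ = 1/((N:ℝ)*t) := by
            rw [Real.norm_eq_abs]
            exact _root_.abs_of_nonneg (div_nonneg zero_le_one (mul_nonneg hN0.le ht0.le))
          rw [hnorm, ← htt, hxabs, hyabs]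
          have ht3 : (0:ℝ) < t*t*t := by positivity
          rw [show C * (1/(t*t*(t))) = C/(t*t*t) by ring, le_div_iff₀ ht3]
          have key : ((|r|/t/2)^3 + (|r'|/t/2)^3 +
              ((|r|/t/2)^3 + (|r'|/t/2)^3 + x^2*y^2/4)) * (t*t*t)
              = |r|^3/4 + |r'|^3/4 + r^2*r'^2/(64*t) := by
            rw [hxdef, hydef]; field_simp; ring
          rw [key]
          have hX : r^2*r'^2/(64*t) ≤ r^2*r'^2 := by
            rw [div_le_iff₀ (by linarith : (0:ℝ) < 64*t)]
            nlinarith [sq_nonneg (r*r'), sq_nonneg r, sq_nonneg r']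
          have h1 : (0:ℝ) ≤ |r|^3 := pow_nonneg (abs_nonneg r) 3
          have h2 : (0:ℝ) ≤ |r'|^3 := pow_nonneg (abs_nonneg r') 3
          rw [hC]
          linarith
  exact hbigO.trans_isLittleO littleo_fact
end

section
/- For λ > −1/2, λ ≠ 0, n ≥ 0, and real x: ∑_{ℓ=0}^{n} ((ℓ+λ)/λ) C_ℓ^λ(x) = ((2n+2λ+1)/(2λ+1)) · binomial(2λ+n, n) · Q_n^{(λ+1/2, λ−1/2)}(x), where Q_n^{(α,β)}(x) = P_n^{(α,β)}(x)/P_n^{(α,β)}(1). -/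
open Finset

/-- The Pochhammer symbol `(a)_n = a (a+1) ⋯ (a+n-1)` for real `a`. -/
def poch (a : ℝ) (n : ℕ) : ℝ := ∏ i ∈ Finset.range n, (a + i)

/-- Generalized binomial coefficient `binomial(a, n) = a(a-1)⋯(a-n+1)/n!`. -/
noncomputable def rchoose (a : ℝ) (n : ℕ) : ℝ := poch (a - n + 1) n / (Nat.factorial n : ℝ)

/-- The Gegenbauer (ultraspherical) polynomial. -/
noncomputable def gegenbauerC (n : ℕ) (lam x : ℝ) : ℝ :=
  (poch (2 * lam) n / (Nat.factorial n : ℝ)) *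
    ∑ k ∈ Finset.range (n + 1),
      poch (-(n : ℝ)) k * poch ((n : ℝ) + 2 * lam) k /
        (poch (lam + 1 / 2) k * (Nat.factorial k : ℝ)) * ((1 - x) / 2) ^ k

/-- The Jacobi polynomial. -/
noncomputable def jacobiP (n : ℕ) (α β x : ℝ) : ℝ :=
  (poch (α + 1) n / (Nat.factorial n : ℝ)) *
    ∑ k ∈ Finset.range (n + 1),
      poch (-(n : ℝ)) k * poch ((n : ℝ) + α + β + 1) k /
        (poch (α + 1) k * (Nat.factorial k : ℝ)) * ((1 - x) / 2) ^ k

/-- Normalized Jacobi polynomial `Q_n^{(α,β)}(x) = P_n^{(α,β)}(x) / P_n^{(α,β)}(1)`. -/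
noncomputable def jacobiQ (n : ℕ) (α β x : ℝ) : ℝ := jacobiP n α β x / jacobiP n α β 1

/- ## Auxiliary Pochhammer lemmas -/

lemma poch_zero (a : ℝ) : poch a 0 = 1 := by simp [poch]

lemma poch_succ (a : ℝ) (n : ℕ) : poch a (n+1) = poch a n * (a + n) := by
  simp [poch, Finset.prod_range_succ]

lemma poch_succ' (a : ℝ) (n : ℕ) : poch a (n+1) = a * poch (a+1) n := by
  rw [poch, Finset.prod_range_succ']
  simp only [Nat.cast_zero, add_zero, mul_comm]
  congr 1
  apply Finset.prod_congr rfl; intro i _; push_cast; ring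

lemma poch_add' (a : ℝ) (m n : ℕ) : poch a (m+n) = poch a m * poch (a+m) n := by
  rw [poch, Finset.prod_range_add]
  congr 1
  apply Finset.prod_congr rfl; intro i _; push_cast; ring

lemma poch_pos {a : ℝ} (ha : 0 < a) (n : ℕ) : 0 < poch a n := by
  induction n with
  | zero => simp [poch_zero]
  | succ m ih => rw [poch_succ]; positivity

lemma poch_ne_zero {a : ℝ} (ha : 0 < a) (n : ℕ) : poch a n ≠ 0 := (poch_pos ha n).ne'

lemma poch_neg_nat_eq_zero {l k : ℕ} (h : l < k) : poch (-(l : ℝ)) k = 0 := by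
  apply Finset.prod_eq_zero (Finset.mem_range.mpr h)
  simp

lemma poch_congr {a b : ℝ} (h : a = b) (k : ℕ) : poch a k = poch b k := by rw [h]

lemma fact_ne_zero (n : ℕ) : ((Nat.factorial n : ℕ) : ℝ) ≠ 0 :=
  Nat.cast_ne_zero.mpr (Nat.factorial_ne_zero n)

/-- `(-l)_k = (-1)^k l!/(l-k)!` for `k ≤ l`. -/
lemma poch_neg_formula {l k : ℕ} (h : k ≤ l) :
    poch (-(l : ℝ)) k = (-1)^k * (Nat.factorial l : ℝ) / (Nat.factorial (l-k) : ℝ) := by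
  induction k with
  | zero =>
    simp [poch_zero, div_self (fact_ne_zero l)]
  | succ m ih =>
    have hm : m ≤ l := by omega
    have hml : l - m = (l - (m+1)) + 1 := by omega
    have hfac : ((Nat.factorial (l-m) : ℕ) : ℝ)
        = ((l:ℝ) - m) * (Nat.factorial (l-(m+1)) : ℝ) := by
      rw [hml, Nat.factorial_succ]
      push_cast [Nat.cast_sub hm, Nat.cast_sub h]
      ring
    have hne : ((l:ℝ) - m) ≠ 0 := by
      have : (m:ℝ) + 1 ≤ l := by exact_mod_cast Nat.cast_le.mpr h
      linarith
    rw [poch_succ, ih hm, hfac, div_mul_eq_mul_div,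
      div_eq_div_iff (mul_ne_zero hne (fact_ne_zero _)) (fact_ne_zero _)]
    ring

/- ## The reduced telescoping identity -/

/-- Key reduced identity:
`∑_{l=k}^n (l+λ)(2λ)_{l+k}/(l-k)! = λ(2n+2λ+1)(2λ+1)_{n+k}/(2 (n-k)! (λ+1/2+k))`. -/
lemma keylem (lam : ℝ) (hlam : -(1/2) < lam) (k : ℕ) :
    ∀ n, k ≤ n →
    ∑ l ∈ Finset.Icc k n, (((l:ℝ)+lam) * poch (2*lam) (l+k) / (Nat.factorial (l-k) : ℝ))
      = lam*(2*(n:ℝ)+2*lam+1) * poch (2*lam+1) (n+k) /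
          (2*((Nat.factorial (n-k) : ℕ) : ℝ)*(lam+1/2+(k:ℝ))) := by
  have hk0 : (0:ℝ) ≤ (k:ℝ) := Nat.cast_nonneg k
  have hlk : (0:ℝ) < lam+1/2+(k:ℝ) := by linarith
  intro n hn
  induction n, hn using Nat.le_induction with
  | base =>
    have hq : ((k:ℝ)+lam) * poch (2*lam) (k+k) = lam * poch (2*lam+1) (k+k) := by
      cases k with
      | zero => simp [poch_zero]
      | succ m =>
        have h1 : m+1+(m+1) = (2*m+1)+1 := by omega
        have e1 : poch (2*lam) ((2*m+1)+1) = 2*lam * poch (2*lam+1) (2*m+1) := poch_succ' _ _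
        have e2 : poch (2*lam+1) ((2*m+1)+1)
            = poch (2*lam+1) (2*m+1) * (2*lam+1+((2*m+1 : ℕ):ℝ)) := poch_succ _ _
        rw [h1, e1, e2]
        push_cast
        ring
    rw [Finset.Icc_self, Finset.sum_singleton, Nat.sub_self, hq]
    have hd : (2*(1:ℝ)*(lam+1/2+(k:ℝ))) ≠ 0 := by
      have : (0:ℝ) < 2*(1:ℝ)*(lam+1/2+(k:ℝ)) := by linarith
      exact this.ne'
    rw [Nat.factorial_zero, Nat.cast_one, div_one, eq_div_iff hd]
    ring
  | succ n hn ih =>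
    rw [Finset.sum_Icc_succ_top (by omega : k ≤ n+1), ih]
    have h1 : n+1+k = (n+k)+1 := by omega
    have hA : poch (2*lam+1) (n+1+k) = poch (2*lam+1) (n+k) * (2*lam+1+((n:ℝ)+(k:ℝ))) := by
      rw [h1, poch_succ]; push_cast; ring
    have hB : poch (2*lam) (n+1+k) = 2*lam * poch (2*lam+1) (n+k) := by
      rw [h1, poch_succ']
    have hF : ((Nat.factorial (n+1-k) : ℕ) : ℝ)
        = ((n:ℝ)-(k:ℝ)+1) * ((Nat.factorial (n-k) : ℕ) : ℝ) := by
      have h2 : n+1-k = (n-k)+1 := by omega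
      rw [h2, Nat.factorial_succ]
      push_cast [Nat.cast_sub hn]
      ring
    have hnk1 : ((n:ℝ)-(k:ℝ)+1) ≠ 0 := by
      have : (k:ℝ) ≤ (n:ℝ) := Nat.cast_le.mpr hn
      linarith
    have hFpos : (0:ℝ) < ((Nat.factorial (n-k) : ℕ) : ℝ) := by positivity
    have hd1 : (2*((Nat.factorial (n-k) : ℕ) : ℝ)*(lam+1/2+(k:ℝ))) ≠ 0 := by
      have : (0:ℝ) < 2*((Nat.factorial (n-k) : ℕ) : ℝ)*(lam+1/2+(k:ℝ)) :=
        mul_pos (mul_pos two_pos hFpos) hlk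
      exact this.ne'
    have hd2 : (((n:ℝ)-(k:ℝ)+1) * ((Nat.factorial (n-k) : ℕ) : ℝ)) ≠ 0 :=
      mul_ne_zero hnk1 (fact_ne_zero _)
    have hd3 : (2*(((n:ℝ)-(k:ℝ)+1)*((Nat.factorial (n-k) : ℕ) : ℝ))*(lam+1/2+(k:ℝ))) ≠ 0 := by
      have h0 : (0:ℝ) < ((n:ℝ)-(k:ℝ)+1) := by
        have : (k:ℝ) ≤ (n:ℝ) := Nat.cast_le.mpr hn
        linarith
      have : (0:ℝ) < 2*(((n:ℝ)-(k:ℝ)+1)*((Nat.factorial (n-k) : ℕ) : ℝ))*(lam+1/2+(k:ℝ)) :=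
        mul_pos (mul_pos two_pos (mul_pos h0 hFpos)) hlk
      exact this.ne'
    rw [hA, hB, hF]
    push_cast
    rw [div_add_div _ _ hd1 hd2, div_eq_div_iff (mul_ne_zero hd1 hd2) hd3]
    ring

lemma poch_mul_shift (a : ℝ) (k : ℕ) : a * poch (a+1) k = poch a k * (a + k) := by
  rw [← poch_succ', poch_succ]

/- ## Auxiliary definitions -/

noncomputable def cst (lam : ℝ) (k : ℕ) : ℝ :=
  (-1)^k / (lam * poch (lam+1/2) k * (Nat.factorial k : ℝ))

noncomputable def RED (lam : ℝ) (n k : ℕ) : ℝ :=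
  lam*(2*(n:ℝ)+2*lam+1) * poch (2*lam+1) (n+k) /
    (2*((Nat.factorial (n-k) : ℕ) : ℝ)*(lam+1/2+(k:ℝ)))

noncomputable def ttm (lam : ℝ) (l k : ℕ) : ℝ :=
  (((l:ℝ)+lam)/lam) * (poch (2*lam) l / (Nat.factorial l : ℝ)) *
    (poch (-(l:ℝ)) k * poch ((l:ℝ)+2*lam) k / (poch (lam+1/2) k * (Nat.factorial k : ℝ)))

/- ## Bridges -/

lemma ttm_eq (lam : ℝ) (hlam : -(1/2) < lam) (hlam0 : lam ≠ 0) {l k : ℕ} (hkl : k ≤ l) :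
    ttm lam l k = cst lam k *
      (((l:ℝ)+lam) * poch (2*lam) (l+k) / ((Nat.factorial (l-k) : ℕ) : ℝ)) := by
  have hl12 : (0:ℝ) < lam + 1/2 := by linarith
  have hD : poch (lam+1/2) k ≠ 0 := poch_ne_zero hl12 k
  have hGH : poch (2*lam) (l+k) = poch (2*lam) l * poch ((l:ℝ)+2*lam) k := by
    rw [poch_add']
    congr 1
    exact poch_congr (by ring) k
  simp only [ttm, cst]
  rw [poch_neg_formula hkl, hGH]
  have eL : (((l:ℝ)+lam)/lam) * (poch (2*lam) l / (Nat.factorial l : ℝ)) *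
      ((-1)^k * (Nat.factorial l : ℝ) / ((Nat.factorial (l-k) : ℕ) : ℝ) *
        poch ((l:ℝ)+2*lam) k / (poch (lam+1/2) k * (Nat.factorial k : ℝ)))
      = (((l:ℝ)+lam) * poch (2*lam) l * ((-1)^k * (Nat.factorial l : ℝ)) * poch ((l:ℝ)+2*lam) k) /
        (lam * (Nat.factorial l : ℝ) * ((Nat.factorial (l-k) : ℕ) : ℝ) *
          (poch (lam+1/2) k * (Nat.factorial k : ℝ))) := by
    ring
  have eR : (-1)^k / (lam * poch (lam+1/2) k * (Nat.factorial k : ℝ)) *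
      (((l:ℝ)+lam) * (poch (2*lam) l * poch ((l:ℝ)+2*lam) k) / ((Nat.factorial (l-k) : ℕ) : ℝ))
      = ((-1)^k * (((l:ℝ)+lam) * (poch (2*lam) l * poch ((l:ℝ)+2*lam) k))) /
        (lam * poch (lam+1/2) k * (Nat.factorial k : ℝ) * ((Nat.factorial (l-k) : ℕ) : ℝ)) := by
    ring
  have d1 : (lam * (Nat.factorial l : ℝ) * ((Nat.factorial (l-k) : ℕ) : ℝ) *
      (poch (lam+1/2) k * (Nat.factorial k : ℝ))) ≠ 0 :=
    mul_ne_zero (mul_ne_zero (mul_ne_zero hlam0 (fact_ne_zero _)) (fact_ne_zero _))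
      (mul_ne_zero hD (fact_ne_zero _))
  have d2 : (lam * poch (lam+1/2) k * (Nat.factorial k : ℝ) * ((Nat.factorial (l-k) : ℕ) : ℝ)) ≠ 0 :=
    mul_ne_zero (mul_ne_zero (mul_ne_zero hlam0 hD) (fact_ne_zero _)) (fact_ne_zero _)
  rw [eL, eR, div_eq_div_iff d1 d2]
  ring

lemma sum_ttm (lam : ℝ) (hlam : -(1/2) < lam) (hlam0 : lam ≠ 0) {n k : ℕ} (hk : k ≤ n) :
    ∑ l ∈ Finset.range (n+1), ttm lam l k = cst lam k * RED lam n k := by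
  have h1 : ∑ l ∈ Finset.range (n+1), ttm lam l k = ∑ l ∈ Finset.Icc k n, ttm lam l k := by
    symm
    apply Finset.sum_subset
    · intro l hl
      rw [Finset.mem_Icc] at hl
      exact Finset.mem_range.mpr (by omega)
    · intro l hl hnotin
      rw [Finset.mem_range] at hl
      rw [Finset.mem_Icc] at hnotin
      have hlk : l < k := by omega
      simp [ttm, poch_neg_nat_eq_zero hlk]
  rw [h1, Finset.sum_congr rfl (fun l hl => ttm_eq lam hlam hlam0 (Finset.mem_Icc.mp hl).1),
    ← Finset.mul_sum, keylem lam hlam k n hk, RED]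

lemma Rrterm (lam : ℝ) (hlam : -(1/2) < lam) (hlam0 : lam ≠ 0) {n k : ℕ} (hk : k ≤ n) :
    (2*(n:ℝ)+2*lam+1)/(2*lam+1) * (poch (2*lam+1) n / (Nat.factorial n : ℝ)) *
      (poch (-(n:ℝ)) k * poch ((n:ℝ)+(lam+1/2)+(lam-1/2)+1) k /
        (poch (lam+1/2+1) k * (Nat.factorial k : ℝ)))
      = cst lam k * RED lam n k := by
  have hl12 : (0:ℝ) < lam + 1/2 := by linarith
  have h2l1 : (0:ℝ) < 2*lam+1 := by linarith
  have hk0 : (0:ℝ) ≤ (k:ℝ) := Nat.cast_nonneg k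
  have hlk : (0:ℝ) < lam+1/2+(k:ℝ) := by linarith
  have hD : poch (lam+1/2) k ≠ 0 := poch_ne_zero hl12 k
  have hD' : poch (lam+1/2+1) k ≠ 0 := poch_ne_zero (by linarith) k
  have hAC : poch (2*lam+1) (n+k) = poch (2*lam+1) n * poch ((n:ℝ)+(lam+1/2)+(lam-1/2)+1) k := by
    rw [poch_add']
    congr 1
    exact poch_congr (by ring) k
  have hDrel : (lam+1/2) * poch (lam+1/2+1) k = poch (lam+1/2) k * (lam+1/2+(k:ℝ)) :=
    poch_mul_shift _ k
  simp only [cst, RED]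
  rw [poch_neg_formula hk, hAC]
  rw [show lam * (2*(n:ℝ)+2*lam+1) *
        (poch (2*lam+1) n * poch ((n:ℝ)+(lam+1/2)+(lam-1/2)+1) k) /
        (2*((Nat.factorial (n-k) : ℕ) : ℝ)*(lam+1/2+(k:ℝ)))
      = lam * (2*(n:ℝ)+2*lam+1) *
        (poch (2*lam+1) n * poch ((n:ℝ)+(lam+1/2)+(lam-1/2)+1) k) /
        (2*((Nat.factorial (n-k) : ℕ) : ℝ)) / (lam+1/2+(k:ℝ)) from (div_div _ _ _).symm]
  have eL : (2*(n:ℝ)+2*lam+1)/(2*lam+1) * (poch (2*lam+1) n / (Nat.factorial n : ℝ)) *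
      ((-1)^k * (Nat.factorial n : ℝ) / ((Nat.factorial (n-k) : ℕ) : ℝ) *
        poch ((n:ℝ)+(lam+1/2)+(lam-1/2)+1) k / (poch (lam+1/2+1) k * (Nat.factorial k : ℝ)))
      = ((2*(n:ℝ)+2*lam+1) * poch (2*lam+1) n * ((-1)^k * (Nat.factorial n : ℝ)) *
          poch ((n:ℝ)+(lam+1/2)+(lam-1/2)+1) k) /
        ((Nat.factorial n : ℝ) * ((Nat.factorial (n-k) : ℕ) : ℝ) *
          (poch (lam+1/2+1) k * (Nat.factorial k : ℝ))) / (2*lam+1) := by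
    ring
  have eR : (-1)^k / (lam * poch (lam+1/2) k * (Nat.factorial k : ℝ)) *
      (lam * (2*(n:ℝ)+2*lam+1) * (poch (2*lam+1) n * poch ((n:ℝ)+(lam+1/2)+(lam-1/2)+1) k) /
        (2 * ((Nat.factorial (n-k) : ℕ) : ℝ)) / (lam+1/2+(k:ℝ)))
      = ((-1)^k * (lam * (2*(n:ℝ)+2*lam+1) *
          (poch (2*lam+1) n * poch ((n:ℝ)+(lam+1/2)+(lam-1/2)+1) k))) /
        (lam * poch (lam+1/2) k * (Nat.factorial k : ℝ) *
          (2 * ((Nat.factorial (n-k) : ℕ) : ℝ))) / (lam+1/2+(k:ℝ)) := by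
    ring
  rw [eL, eR, div_eq_div_iff h2l1.ne' hlk.ne', div_mul_eq_mul_div, div_mul_eq_mul_div,
    div_eq_div_iff
      (mul_ne_zero (mul_ne_zero (fact_ne_zero _) (fact_ne_zero _)) (mul_ne_zero hD' (fact_ne_zero _)))
      (mul_ne_zero (mul_ne_zero (mul_ne_zero hlam0 hD) (fact_ne_zero _))
        (mul_ne_zero two_ne_zero (fact_ne_zero _)))]
  linear_combination (-2*(-1)^k*(2*(n:ℝ)+2*lam+1) * poch (2*lam+1) n *
    poch ((n:ℝ)+(lam+1/2)+(lam-1/2)+1) k * (Nat.factorial n : ℝ) * (Nat.factorial k : ℝ) *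
    ((Nat.factorial (n-k) : ℕ) : ℝ) * lam) * hDrel

theorem gegenbauer_sum_jacobi (lam : ℝ) (hlam : -(1 / 2) < lam) (hlam0 : lam ≠ 0)
    (n : ℕ) (x : ℝ) :
    ∑ ℓ ∈ Finset.range (n + 1), (((ℓ : ℝ) + lam) / lam) * gegenbauerC ℓ lam x
      = (2 * n + 2 * lam + 1) / (2 * lam + 1) * rchoose (2 * lam + n) n *
          jacobiQ n (lam + 1 / 2) (lam - 1 / 2) x := by
  have hlam' : -(1/2) < lam := by linarith
  have hl12 : (0:ℝ) < lam + 1/2 := by linarith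
  -- LHS
  have hL : ∀ l ∈ Finset.range (n+1), ((l:ℝ)+lam)/lam * gegenbauerC l lam x
      = ∑ k ∈ Finset.range (n+1), ttm lam l k * ((1-x)/2)^k := by
    intro l hl
    rw [Finset.mem_range, Nat.lt_succ_iff] at hl
    have e2 : ∑ k ∈ Finset.range (l+1), ttm lam l k * ((1-x)/2)^k
        = ∑ k ∈ Finset.range (n+1), ttm lam l k * ((1-x)/2)^k := by
      apply Finset.sum_subset
      · intro m hm
        rw [Finset.mem_range] at hm ⊢
        omega
      · intro m hm hnot
        rw [Finset.mem_range] at hnot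
        have hlm : l < m := by omega
        simp [ttm, poch_neg_nat_eq_zero hlm]
    rw [← e2]
    simp only [gegenbauerC]
    rw [← mul_assoc, Finset.mul_sum]
    apply Finset.sum_congr rfl
    intro k _
    simp only [ttm]
    ring
  rw [Finset.sum_congr rfl hL, Finset.sum_comm]
  have hK : ∀ k ∈ Finset.range (n+1),
      ∑ l ∈ Finset.range (n+1), ttm lam l k * ((1-x)/2)^k
        = cst lam k * RED lam n k * ((1-x)/2)^k := by
    intro k hk
    rw [Finset.mem_range, Nat.lt_succ_iff] at hk
    rw [← Finset.sum_mul, sum_ttm lam hlam' hlam0 hk]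
  rw [Finset.sum_congr rfl hK]
  -- RHS
  have hfn : ((Nat.factorial n : ℕ) : ℝ) ≠ 0 := fact_ne_zero n
  have hJ1 : jacobiP n (lam+1/2) (lam-1/2) 1 = poch (lam+1/2+1) n / (Nat.factorial n : ℝ) := by
    rw [jacobiP]
    have hs : ∑ k ∈ Finset.range (n+1),
        poch (-(n:ℝ)) k * poch ((n:ℝ)+(lam+1/2)+(lam-1/2)+1) k /
          (poch (lam+1/2+1) k * (Nat.factorial k : ℝ)) * ((1-(1:ℝ))/2)^k = 1 := by
      rw [Finset.sum_eq_single 0]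
      · simp [poch_zero]
      · intro b _ hb
        have : ((1-(1:ℝ))/2) = 0 := by norm_num
        rw [this, zero_pow hb, mul_zero]
      · intro h
        exact absurd (Finset.mem_range.mpr (Nat.succ_pos n)) h
    rw [hs, mul_one]
  have hrch : rchoose (2*lam+(n:ℝ)) n = poch (2*lam+1) n / (Nat.factorial n : ℝ) := by
    rw [rchoose, poch_congr (show 2*lam+(n:ℝ)-(n:ℝ)+1 = 2*lam+1 by ring)]
  have hcoef : poch (lam+1/2+1) n / (Nat.factorial n : ℝ) ≠ 0 :=
    div_ne_zero (poch_ne_zero (by linarith) n) hfn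
  rw [jacobiQ, hJ1, jacobiP, mul_div_cancel_left₀ _ hcoef, hrch, Finset.mul_sum]
  apply Finset.sum_congr rfl
  intro k hk
  rw [Finset.mem_range, Nat.lt_succ_iff] at hk
  rw [← mul_assoc, Rrterm lam hlam' hlam0 hk]
end

section
/- For n ≥ 1 and α > 0: C_n^{α+1/2}(x) + C_{n−1}^{α+1/2}(x) = binomial(n+2α−1, n) · ((n+α)/α) · Q_n^{(α, α−1)}(x). -/
open Finset

lemma poch_rel (a : ℝ) (n : ℕ) : a * poch (a+1) n = poch a n * (a + n) := by
  rw [← poch_succ', poch_succ]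

lemma poch_neg_nat (m : ℕ) : poch (-(m:ℝ)) (m+1) = 0 :=
  Finset.prod_eq_zero (Finset.self_mem_range_succ m) (by ring)

lemma jacobiP_one (n : ℕ) (α β : ℝ) : jacobiP n α β 1 = poch (α + 1) n / (Nat.factorial n : ℝ) := by
  unfold jacobiP
  rw [show ((1:ℝ) - 1)/2 = 0 by norm_num]
  rw [Finset.sum_eq_single 0]
  · simp [poch]
  · intro k _ hk
    rw [zero_pow hk, mul_zero]
  · simp

lemma jacobiQ_eq (n : ℕ) (α β x : ℝ) (h : poch (α+1) n ≠ 0) :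
    jacobiQ n α β x = ∑ k ∈ Finset.range (n + 1),
      poch (-(n : ℝ)) k * poch ((n : ℝ) + α + β + 1) k /
        (poch (α + 1) k * (Nat.factorial k : ℝ)) * ((1 - x) / 2) ^ k := by
  unfold jacobiQ
  rw [jacobiP_one, jacobiP]
  rw [mul_div_assoc, mul_comm, div_mul_cancel₀]
  exact div_ne_zero h (Nat.cast_ne_zero.mpr (Nat.factorial_ne_zero n))

lemma gegen_eq (n : ℕ) (α x : ℝ) : gegenbauerC n (α+1/2) x =
    poch (2*α+1) n / (Nat.factorial n : ℝ) * ∑ k ∈ Finset.range (n+1),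
      poch (-(n:ℝ)) k * poch ((n:ℝ) + (2*α+1)) k / (poch (α+1) k * (Nat.factorial k : ℝ)) * ((1-x)/2)^k := by
  unfold gegenbauerC
  rw [show 2*(α+1/2) = 2*α+1 by ring, show α+1/2+1/2 = α+1 by ring]

theorem gegenbauer_sum_two_jacobi (n : ℕ) (hn : 1 ≤ n) (α : ℝ) (hα : 0 < α) (x : ℝ) :
    gegenbauerC n (α + 1 / 2) x + gegenbauerC (n - 1) (α + 1 / 2) x
      = rchoose ((n : ℝ) + 2 * α - 1) n * (((n : ℝ) + α) / α) * jacobiQ n α (α - 1) x := by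
  obtain ⟨m, rfl⟩ : ∃ m, n = m + 1 := ⟨n - 1, (Nat.succ_pred_eq_of_pos hn).symm⟩
  simp only [Nat.add_sub_cancel]
  have hα1 : (0:ℝ) < α + 1 := by linarith
  rw [gegen_eq, gegen_eq, jacobiQ_eq _ _ _ _ (poch_pos hα1 _).ne']
  rw [rchoose, show ((↑(m+1):ℝ) + 2*α - 1 - ↑(m+1) + 1) = 2*α by push_cast; ring]
  have hext : (∑ k ∈ Finset.range (m+1+1),
      poch (-(m:ℝ)) k * poch ((m:ℝ) + (2*α+1)) k / (poch (α+1) k * (Nat.factorial k : ℝ)) * ((1-x)/2)^k)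
      = ∑ k ∈ Finset.range (m+1),
      poch (-(m:ℝ)) k * poch ((m:ℝ) + (2*α+1)) k / (poch (α+1) k * (Nat.factorial k : ℝ)) * ((1-x)/2)^k := by
    rw [Finset.sum_range_succ, poch_neg_nat]; ring
  rw [← hext]
  rw [Finset.mul_sum, Finset.mul_sum, Finset.mul_sum, ← Finset.sum_add_distrib]
  refine Finset.sum_congr rfl fun k hk => ?_
  push_cast
  have h2a : (2*α) ≠ 0 := by positivity
  have hm1 : ((m:ℝ)+1) ≠ 0 := by positivity
  have hc : ((m:ℝ)+(2*α+1)) ≠ 0 := by positivity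
  have h1 : poch (2*α+1) (m+1) = poch (2*α) (m+1) * (2*α+((m:ℝ)+1))/(2*α) := by
    rw [eq_div_iff h2a]
    have t := poch_rel (2*α) (m+1)
    push_cast at t
    linear_combination t
  have h2 : poch (2*α+1) m = poch (2*α) (m+1)/(2*α) := by
    rw [eq_div_iff h2a, poch_succ' (2*α) m]; ring
  have h3 : poch (-(m:ℝ)) k = poch (-((m:ℝ)+1)) k * (((m:ℝ)+1)-k)/((m:ℝ)+1) := by
    rw [eq_div_iff hm1]
    have t := poch_rel (-((m:ℝ)+1)) k
    rw [show -((m:ℝ)+1)+1 = -(m:ℝ) by ring] at t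
    linear_combination -t
  have h4 : poch (((m:ℝ)+(2*α+1))+1) k = poch ((m:ℝ)+(2*α+1)) k * (((m:ℝ)+(2*α+1))+k)/((m:ℝ)+(2*α+1)) := by
    rw [eq_div_iff hc]
    have t := poch_rel ((m:ℝ)+(2*α+1)) k
    linear_combination t
  rw [show ((m:ℝ)+1+α+(α-1)+1 : ℝ) = (m:ℝ)+(2*α+1) by ring,
      show ((m:ℝ)+1+(2*α+1) : ℝ) = ((m:ℝ)+(2*α+1))+1 by ring,
      h1, h2, h3, h4, Nat.factorial_succ]
  have hE : poch (α+1) k ≠ 0 := (poch_pos hα1 k).ne'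
  have hkf : ((Nat.factorial k : ℕ):ℝ) ≠ 0 := Nat.cast_ne_zero.mpr (Nat.factorial_ne_zero k)
  have hmf : ((Nat.factorial m : ℕ):ℝ) ≠ 0 := Nat.cast_ne_zero.mpr (Nat.factorial_ne_zero m)
  have hα' : α ≠ 0 := hα.ne'
  push_cast
  field_simp
  ring
end
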